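/- If A = Σ_i s_i Z_i with s_i independent random variables and Z_i fixed rank-one square matrices, and A is almost surely invertible, then (E[A])^{-1} · E[det(A)] = E[det(A) · A^{-1}]; consequently, if E[det(A)] ≠ 0, then (E[A])^{-1} = E[det(A) A^{-1}] / E[det(A)]. -/

import Mathlib

open MeasureTheory Matrix

section Aux

variable {d : ℕ}

lemma rows_of_rank_le_one (M : Matrix (Fin d) (Fin d) ℝ) (h : M.rank ≤ 1) :
    ∃ w : Fin d → ℝ, ∀ j, ∃ c : ℝ, M j = c • w := by
  have h' : Module.finrank ℝ (Submodule.span ℝ (Set.range M.row)) ≤ 1 := by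
    rw [← Matrix.rank_eq_finrank_span_row]; exact h
  obtain ⟨v, hv⟩ := (finrank_le_one_iff).mp h'
  refine ⟨(v : Fin d → ℝ), fun j => ?_⟩
  have hmem : M j ∈ Submodule.span ℝ (Set.range M.row) :=
    Submodule.subset_span ⟨j, rfl⟩
  obtain ⟨c, hc⟩ := hv ⟨M j, hmem⟩
  exact ⟨c, congrArg Subtype.val hc.symm⟩

lemma det_zero_of_two_rows_prop (v : Fin d → (Fin d → ℝ)) {j j' : Fin d} (h : j ≠ j')
    (w : Fin d → ℝ) (a b : ℝ) (hj : v j = a • w) (hj' : v j' = b • w) :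
    (Matrix.of v).det = 0 := by
  have hdet : (Matrix.of v).det = Matrix.detRowAlternating v := rfl
  have e1 : v = Function.update v j (a • w) := by
    funext k
    rcases eq_or_ne k j with rfl | hk
    · simp [hj]
    · simp [Function.update_of_ne hk]
  have e2 : Function.update v j w = Function.update (Function.update v j w) j' (b • w) := by
    funext k
    rcases eq_or_ne k j' with rfl | hk
    · simp [Function.update_of_ne h.symm, hj']
    · simp [Function.update_of_ne hk]
  rw [hdet, e1, AlternatingMap.map_update_smul, e2, AlternatingMap.map_update_smul]
  have : (Matrix.detRowAlternating (R := ℝ) (n := Fin d))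
      (Function.update (Function.update v j w) j' w) = 0 := by
    apply AlternatingMap.map_eq_zero_of_eq _ _ (i := j) (j := j') _ h
    simp [Function.update_of_ne h, Function.update_of_ne h.symm]
  rw [this]; simp

end Aux

section Expand

variable {d : ℕ} {ι : Type*} [Fintype ι] [DecidableEq ι]

lemma det_expand (W : ι → Matrix (Fin d) (Fin d) ℝ) (t : ι → ℝ) :
    (∑ i, t i • W i).det
      = ∑ g : Fin d → ι, (∏ j, t (g j)) * (Matrix.of fun j => W (g j) j).det := by
  have h1 : (∑ i, t i • W i).det
      = (Matrix.detRowAlternating (R := ℝ) (n := Fin d)).toMultilinearMap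
          (fun j => ∑ i, t i • W i j) := by
    have harg : ((∑ i, t i • W i : Matrix (Fin d) (Fin d) ℝ) : Fin d → Fin d → ℝ)
        = fun j => ∑ i, t i • W i j := by
      funext j k
      simp [Matrix.sum_apply, Finset.sum_apply]
    show Matrix.detRowAlternating _ = _
    rw [show ((∑ i, t i • W i : Matrix (Fin d) (Fin d) ℝ) : Fin d → Fin d → ℝ)
        = fun j => ∑ i, t i • W i j from harg]
    rfl
  rw [h1, MultilinearMap.map_sum]
  refine Finset.sum_congr rfl fun g _ => ?_
  have h2 := MultilinearMap.map_smul_univ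
    (Matrix.detRowAlternating (R := ℝ) (n := Fin d)).toMultilinearMap
    (fun j => t (g j)) (fun j => W (g j) j)
  rw [show (Matrix.of fun j => W (g j) j).det = Matrix.detRowAlternating (fun j => W (g j) j) from rfl]
  simpa [smul_eq_mul] using h2

end Expand

section Rows

variable {n d : ℕ}

lemma updateRow_sum_repr (Z : Fin n → Matrix (Fin d) (Fin d) ℝ) (t : Fin n → ℝ) (p q : Fin d) :
    Matrix.updateRow (∑ i, t i • Z i) q (Pi.single p 1)
      = ∑ o : Option (Fin n), (Option.elim' 1 t o) •
          (Option.elim' (Matrix.updateRow 0 q (Pi.single p 1))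
            (fun i => Matrix.updateRow (Z i) q 0) o) := by
  ext j k
  rcases eq_or_ne j q with rfl | hj
  · simp [Matrix.sum_apply, Fintype.sum_option]
  · simp [Matrix.sum_apply, Fintype.sum_option, Matrix.updateRow_apply, hj]

end Rows

section Prob

open ProbabilityTheory

lemma exp_prod {Ω : Type*} [MeasurableSpace Ω] (μ : Measure Ω) [IsProbabilityMeasure μ] {n : ℕ}
    (s : Fin n → Ω → ℝ) (hmeas : ∀ i, Measurable (s i))
    (hindep : ProbabilityTheory.iIndepFun s μ)
    (hint : ∀ S : Finset (Fin n), Integrable (fun ω => ∏ i ∈ S, s i ω) μ)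
    (S : Finset (Fin n)) :
    ∫ ω, ∏ i ∈ S, s i ω ∂μ = ∏ i ∈ S, ∫ ω, s i ω ∂μ := by
  classical
  induction S using Finset.induction_on with
  | empty => simp
  | @insert a S ha ih =>
    have hIndep : IndepFun (∏ j ∈ S, s j) (s a) μ :=
      hindep.indepFun_finsetProd_of_notMem hmeas ha
    have hS : Integrable (∏ j ∈ S, s j) μ := by
      have h := hint S
      rwa [show (fun ω => ∏ i ∈ S, s i ω) = ∏ j ∈ S, s j from (Finset.prod_fn S s).symm] at h
    have ha' : Integrable (s a) μ := by simpa using hint {a}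
    have hmul := hIndep.integral_mul_eq_mul_integral hS.aestronglyMeasurable ha'.aestronglyMeasurable
    calc ∫ ω, ∏ i ∈ insert a S, s i ω ∂μ
        = integral μ ((∏ j ∈ S, s j) * s a) := by
          congr 1
          funext ω
          simp [Finset.prod_apply, Finset.prod_insert ha, mul_comm]
      _ = integral μ (∏ j ∈ S, s j) * integral μ (s a) := hmul
      _ = (∏ i ∈ S, ∫ ω, s i ω ∂μ) * ∫ ω, s a ω ∂μ := by
          rw [show integral μ (∏ j ∈ S, s j) = ∫ ω, ∏ i ∈ S, s i ω ∂μ by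
            congr 1; funext ω; simp [Finset.prod_apply]]
          rw [ih]
      _ = ∏ i ∈ insert a S, ∫ ω, s i ω ∂μ := by
          rw [Finset.prod_insert ha, mul_comm]

end Prob

section Main

open ProbabilityTheory

lemma integral_det_expand {Ω : Type*} [MeasurableSpace Ω] (μ : Measure Ω)
    [IsProbabilityMeasure μ] {d : ℕ} {ι : Type*} [Fintype ι] [DecidableEq ι]
    (σ : ι → Ω → ℝ) (Eσ : ι → ℝ)
    (hprod : ∀ T : Finset ι, ∫ ω, ∏ i ∈ T, σ i ω ∂μ = ∏ i ∈ T, Eσ i)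
    (hintT : ∀ T : Finset ι, Integrable (fun ω => ∏ i ∈ T, σ i ω) μ)
    (W : ι → Matrix (Fin d) (Fin d) ℝ)
    (hW : ∀ i, ∃ w, ∀ j, ∃ c : ℝ, W i j = c • w) :
    ∫ ω, (∑ i, σ i ω • W i).det ∂μ = (∑ i, Eσ i • W i).det := by
  classical
  set D : (Fin d → ι) → ℝ := fun g => (Matrix.of fun j => W (g j) j).det with hD
  -- terms with non-injective g vanish
  have hDzero : ∀ g : Fin d → ι, ¬ Function.Injective g → D g = 0 := by
    intro g hg
    obtain ⟨j, j', hgj, hjj⟩ := Function.not_injective_iff.mp hg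
    obtain ⟨w, hw⟩ := hW (g j)
    obtain ⟨c, hc⟩ := hw j
    obtain ⟨c', hc'⟩ := hw j'
    exact det_zero_of_two_rows_prop (fun k => W (g k) k) hjj w c c' hc (by show W (g j') j' = c' • w; rw [← hgj]; exact hc')
  have hint' : ∀ g : Fin d → ι,
      Integrable (fun ω => (∏ j, σ (g j) ω) * D g) μ := by
    intro g
    by_cases hg : Function.Injective g
    · have h1 : ∀ ω, (∏ j, σ (g j) ω) = ∏ i ∈ Finset.univ.image g, σ i ω := fun ω => by
        rw [Finset.prod_image (fun x _ y _ h => hg h)]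
      have := (hintT (Finset.univ.image g)).mul_const (D g)
      refine this.congr ?_
      filter_upwards with ω
      rw [h1 ω]
    · simp only [hDzero g hg, mul_zero]
      exact integrable_const 0
  calc ∫ ω, (∑ i, σ i ω • W i).det ∂μ
      = ∫ ω, ∑ g : Fin d → ι, (∏ j, σ (g j) ω) * D g ∂μ := by
        congr 1; funext ω; exact det_expand W (fun i => σ i ω)
    _ = ∑ g : Fin d → ι, ∫ ω, (∏ j, σ (g j) ω) * D g ∂μ :=
        integral_finset_sum _ (fun g _ => hint' g)
    _ = ∑ g : Fin d → ι, (∏ j, Eσ (g j)) * D g := by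
        refine Finset.sum_congr rfl fun g _ => ?_
        by_cases hg : Function.Injective g
        · have h1 : ∀ ω, (∏ j, σ (g j) ω) = ∏ i ∈ Finset.univ.image g, σ i ω := fun ω => by
            rw [Finset.prod_image (fun x _ y _ h => hg h)]
          have h2 : (∏ j, Eσ (g j)) = ∏ i ∈ Finset.univ.image g, Eσ i := by
            rw [Finset.prod_image (fun x _ y _ h => hg h)]
          calc ∫ ω, (∏ j, σ (g j) ω) * D g ∂μ
              = ∫ ω, (∏ i ∈ Finset.univ.image g, σ i ω) * D g ∂μ := by
                congr 1; funext ω; rw [h1 ω]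
            _ = (∫ ω, ∏ i ∈ Finset.univ.image g, σ i ω ∂μ) * D g := by
                rw [integral_mul_const]
            _ = (∏ j, Eσ (g j)) * D g := by rw [hprod, h2]
        · simp [hDzero g hg]
    _ = (∑ i, Eσ i • W i).det := (det_expand W Eσ).symm

end Main
open scoped Matrix.Norms.L2Operator

/-- If `A = ∑ i, s i • Z i` (s i independent, Z i rank one) is a.s. invertible, then
`(E[A])⁻¹ * E[det A] = E[det A • A⁻¹]`; consequently if `E[det A] ≠ 0` then
`(E[A])⁻¹ = E[det A • A⁻¹] / E[det A]`. -/
theorem inverse_expectation_det_weighted {Ω : Type*} [MeasurableSpace Ω] (μ : Measure Ω)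
    [IsProbabilityMeasure μ] {n d : ℕ}
    (Z : Fin n → Matrix (Fin d) (Fin d) ℝ) (hZ : ∀ i, (Z i).rank ≤ 1)
    (s : Fin n → Ω → ℝ) (hmeas : ∀ i, Measurable (s i))
    (hindep : ProbabilityTheory.iIndepFun s μ)
    (hint : ∀ S : Finset (Fin n), Integrable (fun ω => ∏ i ∈ S, s i ω) μ)
    (A : Ω → Matrix (Fin d) (Fin d) ℝ) (hA : ∀ ω, A ω = ∑ i, s i ω • Z i)
    (hinv : ∀ᵐ ω ∂μ, IsUnit (A ω))
    (hEA : IsUnit (∑ i, (∫ ω, s i ω ∂μ) • Z i))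
    (hdetint : Integrable (fun ω => (A ω).det) μ)
    (hadjint : Integrable (fun ω => (A ω).det • (A ω)⁻¹) μ) :
    (∫ ω, (A ω).det ∂μ) • (∑ i, (∫ ω, s i ω ∂μ) • Z i)⁻¹
        = ∫ ω, (A ω).det • (A ω)⁻¹ ∂μ ∧
    ((∫ ω, (A ω).det ∂μ) ≠ 0 →
      (∑ i, (∫ ω, s i ω ∂μ) • Z i)⁻¹
        = (∫ ω, (A ω).det ∂μ)⁻¹ • ∫ ω, (A ω).det • (A ω)⁻¹ ∂μ) := by
  classical
  set B : Matrix (Fin d) (Fin d) ℝ := ∑ i, (∫ ω, s i ω ∂μ) • Z i with hB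
  have hWrows : ∀ i, ∃ w, ∀ j, ∃ c : ℝ, Z i j = c • w := fun i =>
    rows_of_rank_le_one (Z i) (hZ i)
  have hdetB : ∫ ω, (A ω).det ∂μ = B.det := by
    calc ∫ ω, (A ω).det ∂μ = ∫ ω, (∑ i, s i ω • Z i).det ∂μ := by
          congr 1; funext ω; rw [hA ω]
      _ = B.det := integral_det_expand μ s (fun i => ∫ ω, s i ω ∂μ)
            (exp_prod μ s hmeas hindep hint) hint Z hWrows
  have hae : (fun ω => (A ω).det • (A ω)⁻¹) =ᵐ[μ] (fun ω => (A ω).adjugate) := by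
    filter_upwards [hinv] with ω h
    have hdet : IsUnit (A ω).det := (Matrix.isUnit_iff_isUnit_det _).mp h
    rw [Matrix.inv_def, smul_smul, Ring.inverse_eq_inv, mul_inv_cancel₀ hdet.ne_zero, one_smul]
  have hadjint' : Integrable (fun ω => (A ω).adjugate) μ := hadjint.congr hae
  have hadjB : ∫ ω, (A ω).det • (A ω)⁻¹ ∂μ = B.adjugate := by
    rw [integral_congr_ae hae]
    refine Matrix.ext fun p q => ?_
    let Lpq : Matrix (Fin d) (Fin d) ℝ →ₗ[ℝ] ℝ :=
      { toFun := fun M => M p q, map_add' := fun _ _ => rfl, map_smul' := fun _ _ => rfl }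
    have hL : (∫ ω, (A ω).adjugate ∂μ) p q = ∫ ω, (A ω).adjugate p q ∂μ :=
      ((LinearMap.toContinuousLinearMap Lpq).integral_comp_comm hadjint').symm
    set Z' : Option (Fin n) → Matrix (Fin d) (Fin d) ℝ :=
      Option.elim' (Matrix.updateRow 0 q (Pi.single p 1))
        (fun i => Matrix.updateRow (Z i) q 0) with hZ'
    set σ' : Option (Fin n) → Ω → ℝ := fun o ω => Option.elim' 1 (fun i => s i ω) o with hσ'
    set Eσ' : Option (Fin n) → ℝ := Option.elim' 1 (fun i => ∫ ω, s i ω ∂μ) with hEσ'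
    have h1 : ∀ (T : Finset (Option (Fin n))) ω,
        ∏ o ∈ T, σ' o ω = ∏ i ∈ T.eraseNone, s i ω := fun T ω =>
      (Finset.prod_eraseNone (fun i => s i ω) T).symm
    have hprod' : ∀ T : Finset (Option (Fin n)),
        ∫ ω, ∏ o ∈ T, σ' o ω ∂μ = ∏ o ∈ T, Eσ' o := by
      intro T
      calc ∫ ω, ∏ o ∈ T, σ' o ω ∂μ = ∫ ω, ∏ i ∈ T.eraseNone, s i ω ∂μ := by
            congr 1; funext ω; exact h1 T ω
        _ = ∏ i ∈ T.eraseNone, ∫ ω, s i ω ∂μ := exp_prod μ s hmeas hindep hint _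
        _ = ∏ o ∈ T, Eσ' o := Finset.prod_eraseNone _ T
    have hint'' : ∀ T : Finset (Option (Fin n)),
        Integrable (fun ω => ∏ o ∈ T, σ' o ω) μ := fun T =>
      (hint T.eraseNone).congr (Filter.Eventually.of_forall fun ω => (h1 T ω).symm)
    have hW' : ∀ o, ∃ w, ∀ j, ∃ c : ℝ, Z' o j = c • w := by
      intro o
      cases o with
      | none =>
        refine ⟨Pi.single p 1, fun j => ?_⟩
        rcases eq_or_ne j q with rfl | hj
        · exact ⟨1, by simp [hZ', Option.elim']⟩
        · exact ⟨0, by funext k; simp [hZ', Option.elim', Matrix.updateRow_ne hj]⟩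
      | some i =>
        obtain ⟨w, hw⟩ := hWrows i
        refine ⟨w, fun j => ?_⟩
        rcases eq_or_ne j q with rfl | hj
        · exact ⟨0, by funext k; simp [hZ', Option.elim']⟩
        · obtain ⟨c, hc⟩ := hw j
          exact ⟨c, by rw [show (Z' (some i)) j = (Z i) j from Matrix.updateRow_ne hj]; exact hc⟩
    have hrepr : ∀ ω, (A ω).adjugate p q = (∑ o, σ' o ω • Z' o).det := by
      intro ω
      rw [Matrix.adjugate_apply, hA ω, updateRow_sum_repr Z (fun i => s i ω) p q]
    calc (∫ ω, (A ω).adjugate ∂μ) p q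
        = ∫ ω, (A ω).adjugate p q ∂μ := hL
      _ = ∫ ω, (∑ o, σ' o ω • Z' o).det ∂μ := by
          congr 1; funext ω; exact hrepr ω
      _ = (∑ o, Eσ' o • Z' o).det := integral_det_expand μ σ' Eσ' hprod' hint'' Z' hW'
      _ = (Matrix.updateRow B q (Pi.single p 1)).det := by
          rw [hB, updateRow_sum_repr Z (fun i => ∫ ω, s i ω ∂μ) p q]
      _ = B.adjugate p q := (Matrix.adjugate_apply B p q).symm
  have hudet : IsUnit B.det := (Matrix.isUnit_iff_isUnit_det B).mp hEA
  have hmain : (∫ ω, (A ω).det ∂μ) • B⁻¹ = ∫ ω, (A ω).det • (A ω)⁻¹ ∂μ := by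
    rw [hdetB, hadjB, Matrix.inv_def, smul_smul, Ring.inverse_eq_inv,
      mul_inv_cancel₀ hudet.ne_zero, one_smul]
  refine ⟨hmain, fun hne => ?_⟩
  rw [← hmain, smul_smul, inv_mul_cancel₀ hne, one_smul]
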